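/- For any L_EA-theory T, if 𝓜_{T^⊕} ⊨ T^⊕ then 𝒩_T ⊨ T (i.e. T is true). -/

import Mathlib

namespace FCT

/-- Terms of the language `L_PA = (0, S, +, ·)`.  Variables are indexed by `ℕ`. -/
inductive Term : Type where
  | var : ℕ → Term
  | zero : Term
  | succ : Term → Term
  | add : Term → Term → Term
  | mul : Term → Term → Term

/-- Formulas of `L_PA` extended by a family of unary operators indexed by `Op`
(the base logic).  `op K φ` is the formula `Kφ`. -/
inductive Formula (Op : Type) : Type where
  | eq : Term → Term → Formula Op
  | imp : Formula Op → Formula Op → Formula Op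
  | not : Formula Op → Formula Op
  | all : ℕ → Formula Op → Formula Op
  | op : Op → Formula Op → Formula Op

/-- The ordinals below `ω·ω`, encoded as pairs: `(a, b)` represents `ω·a + b`,
with the lexicographic order. -/
abbrev Ord2 : Type := ℕ ×ₗ ℕ

/-- The ordinal `ω·a + b` as an element of `Ord2`. -/
def omul (a b : ℕ) : Ord2 := toLex (a, b)

/-- Formulas of `L_EA`: one operator `K`. -/
abbrev LEA : Type := Formula Unit

/-- Formulas of `L_{ω·ω}`: operators `K^α` for `α < ω·ω`. -/
abbrev LOO : Type := Formula Ord2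

/-- `Kφ` in `L_EA`. -/
def KK (φ : LEA) : LEA := .op () φ

/-- Variables occurring in a term. -/
def Term.vars : Term → Set ℕ
  | .var x => {x}
  | .zero => ∅
  | .succ t => t.vars
  | .add t u => t.vars ∪ u.vars
  | .mul t u => t.vars ∪ u.vars

/-- Free variables of a formula (`FV(Kφ) = FV(φ)`). -/
def Formula.free {Op : Type} : Formula Op → Set ℕ
  | .eq t u => t.vars ∪ u.vars
  | .imp φ ψ => φ.free ∪ ψ.free
  | .not φ => φ.free
  | .all x φ => φ.free \ {x}
  | .op _ φ => φ.free

/-- A sentence is a formula with no free variables. -/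
def Formula.IsSentence {Op : Type} (φ : Formula Op) : Prop := φ.free = ∅

/-- A theory is a set of sentences. -/
def IsTheory {Op : Type} (T : Set (Formula Op)) : Prop := ∀ φ ∈ T, φ.IsSentence

/-- Substitution of the term `u` for the variable `x` in a term. -/
def Term.subst (x : ℕ) (u : Term) : Term → Term
  | .var y => if y = x then u else .var y
  | .zero => .zero
  | .succ t => .succ (Term.subst x u t)
  | .add t₁ t₂ => .add (Term.subst x u t₁) (Term.subst x u t₂)
  | .mul t₁ t₂ => .mul (Term.subst x u t₁) (Term.subst x u t₂)

/-- Substitution `φ(x|u)` of the term `u` for all free occurrences of `x` in `φ`. -/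
def Formula.subst {Op : Type} (x : ℕ) (u : Term) : Formula Op → Formula Op
  | .eq t₁ t₂ => .eq (Term.subst x u t₁) (Term.subst x u t₂)
  | .imp φ ψ => .imp (Formula.subst x u φ) (Formula.subst x u ψ)
  | .not φ => .not (Formula.subst x u φ)
  | .all y φ => if y = x then .all y φ else .all y (Formula.subst x u φ)
  | .op K φ => .op K (Formula.subst x u φ)

/-- The term `u` is substitutable for the variable `x` in the formula. -/
def Formula.Substitutable {Op : Type} (x : ℕ) (u : Term) : Formula Op → Prop
  | .eq _ _ => True
  | .imp φ ψ => φ.Substitutable x u ∧ ψ.Substitutable x u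
  | .not φ => φ.Substitutable x u
  | .all y φ => x = y ∨ x ∉ φ.free ∨ (y ∉ u.vars ∧ φ.Substitutable x u)
  | .op _ φ => φ.Substitutable x u

/-- Matching of two variables relative to a list of pairs of renamed bound variables. -/
def varMatch : List (ℕ × ℕ) → ℕ → ℕ → Prop
  | [], x, y => x = y
  | (a, b) :: ρ, x, y => (x = a ∧ y = b) ∨ (x ≠ a ∧ y ≠ b ∧ varMatch ρ x y)

/-- Alphabetic matching of terms relative to a list of pairs of renamed bound variables. -/
def Term.alpha (ρ : List (ℕ × ℕ)) : Term → Term → Prop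
  | .var x, .var y => varMatch ρ x y
  | .zero, .zero => True
  | .succ t, .succ u => t.alpha ρ u
  | .add t₁ t₂, .add u₁ u₂ => t₁.alpha ρ u₁ ∧ t₂.alpha ρ u₂
  | .mul t₁ t₂, .mul u₁ u₂ => t₁.alpha ρ u₁ ∧ t₂.alpha ρ u₂
  | _, _ => False

/-- Alphabetic matching of formulas relative to a list of pairs of renamed bound variables. -/
def Formula.alpha {Op : Type} (ρ : List (ℕ × ℕ)) : Formula Op → Formula Op → Prop
  | .eq t₁ t₂, .eq u₁ u₂ => t₁.alpha ρ u₁ ∧ t₂.alpha ρ u₂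
  | .imp φ₁ φ₂, .imp ψ₁ ψ₂ => φ₁.alpha ρ ψ₁ ∧ φ₂.alpha ρ ψ₂
  | .not φ, .not ψ => φ.alpha ρ ψ
  | .all x φ, .all y ψ => φ.alpha ((x, y) :: ρ) ψ
  | .op K φ, .op K' ψ => K = K' ∧ φ.alpha ρ ψ
  | _, _ => False

/-- `ψ` is an alphabetic variant of `φ`: it is obtained from `φ` by renaming
bound variables while respecting the binding of the quantifiers. -/
def Formula.AlphaVariant {Op : Type} (φ ψ : Formula Op) : Prop := φ.alpha [] ψ

/-- The data of a structure for the base logic over `L_PA` extended by the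
operators `Op`: a first-order part together with a truth valuation
`opSat K φ s` ("`M ⊨ Kφ[s]`") for operator-prefixed formulas. -/
structure PreStruc (Op : Type) : Type 1 where
  U : Type
  zero : U
  succ : U → U
  add : U → U → U
  mul : U → U → U
  opSat : Op → Formula Op → (ℕ → U) → Prop

/-- Evaluation of terms. -/
def Term.eval {Op : Type} (M : PreStruc Op) (s : ℕ → M.U) : Term → M.U
  | .var x => s x
  | .zero => M.zero
  | .succ t => M.succ (t.eval M s)
  | .add t u => M.add (t.eval M s) (u.eval M s)
  | .mul t u => M.mul (t.eval M s) (u.eval M s)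

/-- Satisfaction `M ⊨ φ[s]`: as in first-order logic on non-operator formulas,
and given by `opSat` on operator-prefixed formulas. -/
def Sat {Op : Type} (M : PreStruc Op) : Formula Op → (ℕ → M.U) → Prop
  | .eq t u, s => t.eval M s = u.eval M s
  | .imp φ ψ, s => Sat M φ s → Sat M ψ s
  | .not φ, s => ¬ Sat M φ s
  | .all x φ, s => ∀ a : M.U, Sat M φ (Function.update s x a)
  | .op K φ, s => M.opSat K φ s

/-- `M` is a genuine structure of the base logic: its operator valuation
(1) depends only on the values of the assignment on the free variables,
(2) is invariant under renaming of bound variables, and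
(3) satisfies weak substitution. -/
def IsStruc {Op : Type} (M : PreStruc Op) : Prop :=
  (∀ (K : Op) (φ : Formula Op) (s t : ℕ → M.U),
      (∀ x ∈ φ.free, s x = t x) → (M.opSat K φ s ↔ M.opSat K φ t)) ∧
  (∀ (K : Op) (φ ψ : Formula Op) (s : ℕ → M.U),
      φ.AlphaVariant ψ → (M.opSat K φ s ↔ M.opSat K ψ s)) ∧
  (∀ (K : Op) (φ : Formula Op) (x y : ℕ) (s : ℕ → M.U),
      φ.Substitutable x (.var y) →
      (M.opSat K (φ.subst x (.var y)) s ↔ M.opSat K φ (Function.update s x (s y))))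

/-- A formula is valid if it holds in every structure under every assignment. -/
def Valid {Op : Type} (φ : Formula Op) : Prop :=
  ∀ M : PreStruc Op, IsStruc M → ∀ s : ℕ → M.U, Sat M φ s

/-- `T ⊨ φ`: every structure satisfying all members of `T` (under every
assignment) satisfies `φ` under every assignment. -/
def Models {Op : Type} (T : Set (Formula Op)) (φ : Formula Op) : Prop :=
  ∀ M : PreStruc Op, IsStruc M → (∀ ψ ∈ T, ∀ s : ℕ → M.U, Sat M ψ s) →
    ∀ s : ℕ → M.U, Sat M φ s

/-- `M ⊨ T`. -/
def SatTheory {Op : Type} (M : PreStruc Op) (T : Set (Formula Op)) : Prop :=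
  ∀ φ ∈ T, ∀ s : ℕ → M.U, Sat M φ s

/-- The numeral `n̄`. -/
def numeral : ℕ → Term
  | 0 => .zero
  | n + 1 => .succ (numeral n)

/-- Helper for `φ^s`: replace every free occurrence of a variable `x` not in the
list `B` of bound variables by the numeral for `s x`. -/
def Term.numSub (s : ℕ → ℕ) (B : List ℕ) : Term → Term
  | .var x => if x ∈ B then .var x else numeral (s x)
  | .zero => .zero
  | .succ t => .succ (t.numSub s B)
  | .add t u => .add (t.numSub s B) (u.numSub s B)
  | .mul t u => .mul (t.numSub s B) (u.numSub s B)

/-- Helper for `φ^s` (carrying the list of bound variables). -/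
def Formula.numSub {Op : Type} (s : ℕ → ℕ) : List ℕ → Formula Op → Formula Op
  | B, .eq t u => .eq (t.numSub s B) (u.numSub s B)
  | B, .imp φ ψ => .imp (φ.numSub s B) (ψ.numSub s B)
  | B, .not φ => .not (φ.numSub s B)
  | B, .all x φ => .all x (φ.numSub s (x :: B))
  | B, .op K φ => .op K (φ.numSub s B)

/-- `φ^s`: the sentence obtained by substituting the numeral for `s x` for each
free occurrence of each variable `x` in `φ`. -/
def assignSub {Op : Type} (s : ℕ → ℕ) (φ : Formula Op) : Formula Op :=
  φ.numSub s []

/-- The intended structure `𝒩_T` of an `L_EA`-theory `T`: standard first-order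
part and `𝒩_T ⊨ Kφ[s]` iff `T ⊨ φ^s`. -/
def NStruc (T : Set LEA) : PreStruc Unit where
  U := ℕ
  zero := 0
  succ := Nat.succ
  add := (· + ·)
  mul := (· * ·)
  opSat := fun _ φ s => Models T (assignSub s φ)

/-- `T` is true: `𝒩_T ⊨ T`. -/
def TheoryTrue (T : Set LEA) : Prop := SatTheory (NStruc T) T

/-- `On(φ)`: the set of `α < ω·ω` such that `K^α` occurs in `φ`. -/
def Formula.On : LOO → Set Ord2
  | .eq _ _ => ∅
  | .imp φ ψ => φ.On ∪ ψ.On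
  | .not φ => φ.On
  | .all _ φ => φ.On
  | .op α φ => insert α φ.On

/-- `T ∩ α`: the members of `T` all of whose superscripts are `< α`. -/
def cut (T : Set LOO) (α : Ord2) : Set LOO := {φ | φ ∈ T ∧ ∀ β ∈ φ.On, β < α}

/-- The intended structure `𝓜_T` of an `L_{ω·ω}`-theory `T`: standard
first-order part and `𝓜_T ⊨ K^αφ[s]` iff `T∩α ⊨ φ^s`. -/
def MStruc (T : Set LOO) : PreStruc Ord2 where
  U := ℕ
  zero := 0
  succ := Nat.succ
  add := (· + ·)
  mul := (· * ·)
  opSat := fun α φ s => Models (cut T α) (assignSub s φ)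

/-- The least element of a set `A ⊆ ω·ω` (junk value if `A` is empty):
first minimize the `ω`-coefficient, then the finite part. -/
noncomputable def leastIn (A : Set Ord2) : Ord2 :=
  let a := sInf {a : ℕ | ∃ b : ℕ, toLex (a, b) ∈ A}
  toLex (a, sInf {b : ℕ | toLex (a, b) ∈ A})

/-- The stratifier given by `X ⊆ ω·ω`: fixes atomic formulas, commutes with
`→`, `¬`, `∀`, and sends `Kφ₀` to `K^α φ₀⁺` where `α` is the least element of
`X \ On(φ₀⁺)`. -/
noncomputable def stratify (X : Set Ord2) : LEA → LOO
  | .eq t u => .eq t u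
  | .imp φ ψ => .imp (stratify X φ) (stratify X ψ)
  | .not φ => .not (stratify X φ)
  | .all x φ => .all x (stratify X φ)
  | .op _ φ => .op (leastIn (X \ (stratify X φ).On)) (stratify X φ)

/-- A stratifier is the map given by some infinite `X ⊆ ω·ω`. -/
def IsStratifier (f : LEA → LOO) : Prop :=
  ∃ X : Set Ord2, X.Infinite ∧ f = stratify X

/-- `T^⊕ = { φ⁺ : φ ∈ T, ⁺ a stratifier }`. -/
def oplus (T : Set LEA) : Set LOO :=
  {ψ | ∃ φ ∈ T, ∃ f : LEA → LOO, IsStratifier f ∧ ψ = f φ}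

/-- The veristratifier: the stratifier given by `X = {ω·1, ω·2, ω·3, …}`. -/
noncomputable def veristratifier : LEA → LOO :=
  stratify {α : Ord2 | ∃ n : ℕ, α = omul (n + 1) 0}

/-- `φ⁻`: change every `K^α` into `K`. -/
def Formula.down : LOO → LEA
  | .eq t u => .eq t u
  | .imp φ ψ => .imp φ.down ψ.down
  | .not φ => .not φ.down
  | .all x φ => .all x φ.down
  | .op _ φ => .op () φ.down

/-- `M⁺` for an `L_{ω·ω}`-structure `M` and a stratifier `⁺`: same universe and
`L_PA`-part, and `M⁺ ⊨ Kφ[s]` iff `M ⊨ (Kφ)⁺[s]`. -/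
def upStruc (M : PreStruc Ord2) (f : LEA → LOO) : PreStruc Unit where
  U := M.U
  zero := M.zero
  succ := M.succ
  add := M.add
  mul := M.mul
  opSat := fun _ φ s => Sat M (f (.op () φ)) s

/-- `M⁻` for an `L_EA`-structure `M`: same universe and `L_PA`-part, and
`M⁻ ⊨ K^αφ[s]` iff `M ⊨ K(φ⁻)[s]`. -/
def downStruc (M : PreStruc Unit) : PreStruc Ord2 where
  U := M.U
  zero := M.zero
  succ := M.succ
  add := M.add
  mul := M.mul
  opSat := fun _ φ s => Sat M (.op () φ.down) s

open Classical in
/-- `h(φ)`: replace every occurrence of `K^α` with `α ∈ X` by `K^{h(α)}`. -/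
noncomputable def mapOps (X : Set Ord2) (h : Ord2 → Ord2) : LOO → LOO
  | .eq t u => .eq t u
  | .imp φ ψ => .imp (mapOps X h φ) (mapOps X h ψ)
  | .not φ => .not (mapOps X h φ)
  | .all x φ => .all x (mapOps X h φ)
  | .op α φ => .op (if α ∈ X then h α else α) (mapOps X h φ)

/-- `h : X → ω·ω` is order preserving. -/
def OrdPresOn (X : Set Ord2) (h : Ord2 → Ord2) : Prop :=
  ∀ a ∈ X, ∀ b ∈ X, a < b → h a < h b

/-- A uniform `L_{ω·ω}`-theory. -/
def Uniform (T : Set LOO) : Prop :=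
  ∀ (X : Set Ord2) (h : Ord2 → Ord2), OrdPresOn X h →
    ∀ φ ∈ T, φ.On ⊆ X → mapOps X h φ ∈ T

/-- `h(M)`: same universe and `L_PA`-part as `M`, and
`h(M) ⊨ K^αφ[s]` iff `M ⊨ h(K^αφ)[s]`. -/
noncomputable def hStruc (X : Set Ord2) (h : Ord2 → Ord2) (M : PreStruc Ord2) :
    PreStruc Ord2 where
  U := M.U
  zero := M.zero
  succ := M.succ
  add := M.add
  mul := M.mul
  opSat := fun α φ s => Sat M (mapOps X h (.op α φ)) s

/-- The depth of nesting of the operators. -/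
def Formula.depth {Op : Type} : Formula Op → ℕ
  | .eq _ _ => 0
  | .imp φ ψ => max φ.depth ψ.depth
  | .not φ => φ.depth
  | .all _ φ => φ.depth
  | .op _ φ => φ.depth + 1

/-- `∀x₁ ⋯ ∀xₙ φ`. -/
def Formula.alls {Op : Type} : List ℕ → Formula Op → Formula Op
  | [], φ => φ
  | x :: l, φ => .all x (Formula.alls l φ)

/-- `ψ` is a universal closure of `φ`: a sentence of the form `∀x₁ ⋯ ∀xₙ φ`. -/
def IsUClosure {Op : Type} (φ ψ : Formula Op) : Prop :=
  ψ.IsSentence ∧ ∃ l : List ℕ, ψ = Formula.alls l φ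

/-- The schema `E₁`: universal closures of `Kφ`, `φ` valid. -/
def E1 : Set LEA := {χ | ∃ φ : LEA, Valid φ ∧ IsUClosure (KK φ) χ}

/-- The schema `E₂`: universal closures of `K(φ→ψ) → Kφ → Kψ`. -/
def E2 : Set LEA :=
  {χ | ∃ φ ψ : LEA, IsUClosure (.imp (KK (.imp φ ψ)) (.imp (KK φ) (KK ψ))) χ}

/-- The schema `E′₂`: universal closures of `K(φ→ψ) → Kφ → Kψ` with
`depth(φ) ≤ depth(ψ)`. -/
def E2' : Set LEA :=
  {χ | ∃ φ ψ : LEA, φ.depth ≤ ψ.depth ∧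
    IsUClosure (.imp (KK (.imp φ ψ)) (.imp (KK φ) (KK ψ))) χ}

/-- The schema `E₃`: universal closures of `Kφ → φ`. -/
def E3 : Set LEA := {χ | ∃ φ : LEA, IsUClosure (.imp (KK φ) φ) χ}

/-- The Assigned Validity schema: all `φ^s` with `φ` valid, `s : ℕ → ℕ`. -/
def AssignedValidity : Set LEA :=
  {χ | ∃ (φ : LEA) (s : ℕ → ℕ), Valid φ ∧ χ = assignSub s φ}

/-- `K(T₀) = { Kφ : φ ∈ T₀ }`. -/
def KSet (T : Set LEA) : Set LEA := {χ | ∃ φ ∈ T, χ = KK φ}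

/-- Membership in the smallest `K`-closed set containing `S`. -/
inductive KClosureMem (S : Set LEA) : LEA → Prop
  | base {φ : LEA} : φ ∈ S → KClosureMem S φ
  | k {φ : LEA} : KClosureMem S φ → KClosureMem S (KK φ)

/-- The smallest `K`-closed theory containing `S`. -/
def KClosure (S : Set LEA) : Set LEA := {φ | KClosureMem S φ}

/-- `T₀` is upgeneric: `𝓜_{T^⊕} ⊨ T₀^⊕` for every `L_EA`-theory `T ⊇ T₀`. -/
def Upgeneric (T₀ : Set LEA) : Prop :=
  ∀ T : Set LEA, IsTheory T → T₀ ⊆ T → SatTheory (MStruc (oplus T)) (oplus T₀)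

/-- A concrete Gödel numbering of terms. -/
def encodeTerm : Term → ℕ
  | .var x => Nat.pair 0 x
  | .zero => Nat.pair 1 0
  | .succ t => Nat.pair 2 (encodeTerm t)
  | .add t u => Nat.pair 3 (Nat.pair (encodeTerm t) (encodeTerm u))
  | .mul t u => Nat.pair 4 (Nat.pair (encodeTerm t) (encodeTerm u))

/-- A concrete Gödel numbering of `L_EA`-formulas. -/
def encodeLEA : LEA → ℕ
  | .eq t u => Nat.pair 0 (Nat.pair (encodeTerm t) (encodeTerm u))
  | .imp φ ψ => Nat.pair 1 (Nat.pair (encodeLEA φ) (encodeLEA ψ))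
  | .not φ => Nat.pair 2 (encodeLEA φ)
  | .all x φ => Nat.pair 3 (Nat.pair x (encodeLEA φ))
  | .op _ φ => Nat.pair 4 (encodeLEA φ)

/-- `T` is recursively enumerable: the set of Gödel numbers of its members is r.e. -/
def RETheory (T : Set LEA) : Prop := REPred fun n => ∃ φ ∈ T, encodeLEA φ = n

/-- `T₀` is r.e.-upgeneric: `T₀` is r.e. and `𝓜_{T^⊕} ⊨ T₀^⊕` for every r.e.
`L_EA`-theory `T ⊇ T₀`. -/
def REUpgeneric (T₀ : Set LEA) : Prop :=
  RETheory T₀ ∧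
    ∀ T : Set LEA, IsTheory T → RETheory T → T₀ ⊆ T →
      SatTheory (MStruc (oplus T)) (oplus T₀)


/-! ### Auxiliary development -/

/-- Explicit stratification along an enumeration `g`. -/
noncomputable def stratG (g : ℕ → Ord2) : LEA → LOO
  | .eq t u => .eq t u
  | .imp φ ψ => .imp (stratG g φ) (stratG g ψ)
  | .not φ => .not (stratG g φ)
  | .all x φ => .all x (stratG g φ)
  | .op _ φ => .op (g φ.depth) (stratG g φ)

/-- The enumeration `n ↦ ω·(n+1)`. -/
def g0 : ℕ → Ord2 := fun n => toLex (n + 1, 0)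

lemma g0_mono : StrictMono g0 := by
  intro a b hab
  exact (Prod.Lex.lt_iff ..).mpr (Or.inl (by dsimp only [g0, ofLex_toLex]; omega))

lemma leastIn_eq {A : Set Ord2} {m : Ord2} (hm : m ∈ A) (hle : ∀ x ∈ A, m ≤ x) :
    leastIn A = m := by
  have hm' : m = toLex ((ofLex m).1, (ofLex m).2) := rfl
  set m1 := (ofLex m).1 with hm1
  set m2 := (ofLex m).2 with hm2
  have h1 : sInf {a : ℕ | ∃ b : ℕ, toLex (a, b) ∈ A} = m1 := by
    apply le_antisymm
    · exact Nat.sInf_le ⟨m2, by rw [← hm']; exact hm⟩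
    · refine le_csInf ⟨m1, ⟨m2, ?_⟩⟩ ?_
      · rw [← hm']; exact hm
      rintro a ⟨b, hb⟩
      have h := hle _ hb
      rw [hm'] at h
      rcases (Prod.Lex.le_iff ..).mp h with h | ⟨h, -⟩
      · dsimp only [ofLex_toLex] at h; omega
      · dsimp only [ofLex_toLex] at h; omega
  have h2 : sInf {b : ℕ | toLex (m1, b) ∈ A} = m2 := by
    apply le_antisymm
    · exact Nat.sInf_le (by show toLex (m1, m2) ∈ A; rw [← hm']; exact hm)
    · refine le_csInf ⟨m2, ?_⟩ ?_
      · show toLex (m1, m2) ∈ A; rw [← hm']; exact hm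
      intro b hb
      have h := hle _ hb
      rw [hm'] at h
      rcases (Prod.Lex.le_iff ..).mp h with h | ⟨-, h⟩
      · dsimp only [ofLex_toLex] at h; omega
      · exact h
  show toLex (sInf {a : ℕ | ∃ b : ℕ, toLex (a, b) ∈ A},
      sInf {b : ℕ | toLex (sInf {a : ℕ | ∃ b : ℕ, toLex (a, b) ∈ A}, b) ∈ A}) = m
  rw [h1, h2, ← hm']

lemma leastIn_range_diff {g : ℕ → Ord2} (hg : StrictMono g) (k : ℕ) :
    leastIn (Set.range g \ g '' Set.Iio k) = g k := by
  apply leastIn_eq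
  · refine ⟨⟨k, rfl⟩, ?_⟩
    rintro ⟨j, hj, hjk⟩
    exact absurd (hg.injective hjk) (by simp only [Set.mem_Iio] at hj; omega)
  · rintro x ⟨⟨n, rfl⟩, hx⟩
    have hn : ¬ n < k := fun hlt => hx ⟨n, hlt, rfl⟩
    exact hg.monotone (by omega)

lemma depth_subst {Op : Type} (x : ℕ) (u : Term) :
    ∀ φ : Formula Op, (φ.subst x u).depth = φ.depth := by
  intro φ
  induction φ with
  | eq t₁ t₂ => rfl
  | imp φ ψ ihφ ihψ => simp [Formula.subst, Formula.depth, ihφ, ihψ]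
  | not φ ih => simpa [Formula.subst, Formula.depth] using ih
  | all y φ ih =>
    simp only [Formula.subst]
    split <;> simp [Formula.depth, ih]
  | op K φ ih => simp [Formula.subst, Formula.depth, ih]

lemma depth_numSub {Op : Type} (s : ℕ → ℕ) :
    ∀ (φ : Formula Op) (B : List ℕ), (φ.numSub s B).depth = φ.depth := by
  intro φ
  induction φ with
  | eq t₁ t₂ => intro B; rfl
  | imp φ ψ ihφ ihψ => intro B; simp [Formula.numSub, Formula.depth, ihφ, ihψ]
  | not φ ih => intro B; simpa [Formula.numSub, Formula.depth] using ih B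
  | all y φ ih => intro B; simp [Formula.numSub, Formula.depth, ih]
  | op K φ ih => intro B; simp [Formula.numSub, Formula.depth, ih]

lemma depth_alpha {Op : Type} (φ : Formula Op) :
    ∀ (ψ : Formula Op) (ρ : List (ℕ × ℕ)), Formula.alpha ρ φ ψ → φ.depth = ψ.depth := by
  induction φ with
  | eq t₁ t₂ => intro ψ ρ h; cases ψ <;> first | rfl | exact h.elim
  | imp φ₁ φ₂ ih₁ ih₂ =>
    intro ψ ρ h
    cases ψ with
    | imp ψ₁ ψ₂ =>
      obtain ⟨h1, h2⟩ := h
      simp [Formula.depth, ih₁ ψ₁ ρ h1, ih₂ ψ₂ ρ h2]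
    | eq _ _ => exact h.elim
    | not _ => exact h.elim
    | all _ _ => exact h.elim
    | op _ _ => exact h.elim
  | not φ ih =>
    intro ψ ρ h
    cases ψ with
    | not ψ => exact ih ψ ρ h
    | eq _ _ => exact h.elim
    | imp _ _ => exact h.elim
    | all _ _ => exact h.elim
    | op _ _ => exact h.elim
  | all x φ ih =>
    intro ψ ρ h
    cases ψ with
    | all y ψ => exact ih ψ _ h
    | eq _ _ => exact h.elim
    | imp _ _ => exact h.elim
    | not _ => exact h.elim
    | op _ _ => exact h.elim
  | op K φ ih =>
    intro ψ ρ h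
    cases ψ with
    | op K' ψ => obtain ⟨-, h⟩ := h; simp [Formula.depth, ih ψ ρ h]
    | eq _ _ => exact h.elim
    | imp _ _ => exact h.elim
    | not _ => exact h.elim
    | all _ _ => exact h.elim

lemma free_stratG (g : ℕ → Ord2) : ∀ φ : LEA, (stratG g φ).free = φ.free := by
  intro φ
  induction φ <;> simp [stratG, Formula.free, *]

lemma free_down : ∀ φ : LOO, φ.down.free = φ.free := by
  intro φ
  induction φ <;> simp [Formula.down, Formula.free, *]

lemma down_stratify (X : Set Ord2) : ∀ φ : LEA, (stratify X φ).down = φ := by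
  intro φ
  induction φ with
  | eq t u => rfl
  | imp φ ψ ihφ ihψ => simp [stratify, Formula.down, ihφ, ihψ]
  | not φ ih => simp [stratify, Formula.down, ih]
  | all x φ ih => simp [stratify, Formula.down, ih]
  | op K φ ih => cases K; simp [stratify, Formula.down, ih]

lemma down_stratG (g : ℕ → Ord2) : ∀ φ : LEA, (stratG g φ).down = φ := by
  intro φ
  induction φ with
  | eq t u => rfl
  | imp φ ψ ihφ ihψ => simp [stratG, Formula.down, ihφ, ihψ]
  | not φ ih => simp [stratG, Formula.down, ih]
  | all x φ ih => simp [stratG, Formula.down, ih]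
  | op K φ ih => cases K; simp [stratG, Formula.down, ih]

lemma down_numSub (s : ℕ → ℕ) :
    ∀ (φ : LOO) (B : List ℕ), (φ.numSub s B).down = φ.down.numSub s B := by
  intro φ
  induction φ <;> intro B <;> simp [Formula.numSub, Formula.down, *]

lemma down_subst (x : ℕ) (u : Term) :
    ∀ φ : LOO, (φ.subst x u).down = φ.down.subst x u := by
  intro φ
  induction φ with
  | eq t₁ t₂ => rfl
  | imp φ ψ ihφ ihψ => simp [Formula.subst, Formula.down, ihφ, ihψ]
  | not φ ih => simp [Formula.subst, Formula.down, ih]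
  | all y φ ih =>
    simp only [Formula.subst]
    by_cases hyx : y = x
    · simp [hyx, Formula.down, Formula.subst]
    · simp [hyx, Formula.down, Formula.subst, ih]
  | op K φ ih => simp [Formula.subst, Formula.down, ih]

lemma substitutable_down (x : ℕ) (u : Term) :
    ∀ φ : LOO, φ.Substitutable x u → φ.down.Substitutable x u := by
  intro φ
  induction φ with
  | eq t₁ t₂ => intro h; trivial
  | imp φ ψ ihφ ihψ => rintro ⟨h1, h2⟩; exact ⟨ihφ h1, ihψ h2⟩
  | not φ ih => exact ih
  | all y φ ih =>
    rintro (h | h | ⟨h1, h2⟩)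
    · exact Or.inl h
    · exact Or.inr (Or.inl (by rwa [free_down]))
    · exact Or.inr (Or.inr ⟨h1, ih h2⟩)
  | op K φ ih => exact ih

lemma substitutable_stratG (g : ℕ → Ord2) (x : ℕ) (u : Term) :
    ∀ φ : LEA, φ.Substitutable x u → (stratG g φ).Substitutable x u := by
  intro φ
  induction φ with
  | eq t₁ t₂ => intro h; trivial
  | imp φ ψ ihφ ihψ => rintro ⟨h1, h2⟩; exact ⟨ihφ h1, ihψ h2⟩
  | not φ ih => exact ih
  | all y φ ih =>
    rintro (h | h | ⟨h1, h2⟩)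
    · exact Or.inl h
    · exact Or.inr (Or.inl (by rwa [free_stratG]))
    · exact Or.inr (Or.inr ⟨h1, ih h2⟩)
  | op K φ ih => exact ih

lemma alpha_stratG (g : ℕ → Ord2) (φ : LEA) :
    ∀ (ψ : LEA) (ρ : List (ℕ × ℕ)), Formula.alpha ρ φ ψ →
      Formula.alpha ρ (stratG g φ) (stratG g ψ) := by
  induction φ with
  | eq t₁ t₂ => intro ψ ρ h; cases ψ <;> first | exact h | exact h.elim
  | imp φ₁ φ₂ ih₁ ih₂ =>
    intro ψ ρ h
    cases ψ with
    | imp ψ₁ ψ₂ => exact ⟨ih₁ ψ₁ ρ h.1, ih₂ ψ₂ ρ h.2⟩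
    | eq _ _ => exact h.elim
    | not _ => exact h.elim
    | all _ _ => exact h.elim
    | op _ _ => exact h.elim
  | not φ ih =>
    intro ψ ρ h
    cases ψ with
    | not ψ => exact ih ψ ρ h
    | eq _ _ => exact h.elim
    | imp _ _ => exact h.elim
    | all _ _ => exact h.elim
    | op _ _ => exact h.elim
  | all x φ ih =>
    intro ψ ρ h
    cases ψ with
    | all y ψ => exact ih ψ _ h
    | eq _ _ => exact h.elim
    | imp _ _ => exact h.elim
    | not _ => exact h.elim
    | op _ _ => exact h.elim
  | op K φ ih =>
    intro ψ ρ h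
    cases ψ with
    | op K' ψ =>
      obtain ⟨-, h⟩ := h
      exact ⟨by rw [depth_alpha φ ψ ρ h], ih ψ ρ h⟩
    | eq _ _ => exact h.elim
    | imp _ _ => exact h.elim
    | not _ => exact h.elim
    | all _ _ => exact h.elim

lemma subst_stratG (g : ℕ → Ord2) (x : ℕ) (u : Term) :
    ∀ φ : LEA, stratG g (φ.subst x u) = (stratG g φ).subst x u := by
  intro φ
  induction φ with
  | eq t₁ t₂ => rfl
  | imp φ ψ ihφ ihψ => simp [Formula.subst, stratG, ihφ, ihψ]
  | not φ ih => simp [Formula.subst, stratG, ih]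
  | all y φ ih =>
    simp only [Formula.subst]
    by_cases hyx : y = x
    · simp [hyx, stratG, Formula.subst]
    · simp [hyx, stratG, Formula.subst, ih]
  | op K φ ih => simp [Formula.subst, stratG, ih, depth_subst]

lemma numSub_stratG (g : ℕ → Ord2) (s : ℕ → ℕ) :
    ∀ (φ : LEA) (B : List ℕ), stratG g (φ.numSub s B) = (stratG g φ).numSub s B := by
  intro φ
  induction φ with
  | eq t u => intro B; rfl
  | imp φ ψ ihφ ihψ => intro B; simp [Formula.numSub, stratG, ihφ, ihψ]
  | not φ ih => intro B; simp [Formula.numSub, stratG, ih]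
  | all y φ ih => intro B; simp [Formula.numSub, stratG, ih]
  | op K φ ih => intro B; simp [Formula.numSub, stratG, ih, depth_numSub]

lemma On_stratG (g : ℕ → Ord2) :
    ∀ φ : LEA, (stratG g φ).On = g '' Set.Iio φ.depth := by
  intro φ
  induction φ with
  | eq t u =>
    show (∅ : Set Ord2) = g '' Set.Iio 0
    have : (Set.Iio 0 : Set ℕ) = ∅ := by ext k; simp
    rw [this, Set.image_empty]
  | imp φ ψ ihφ ihψ =>
    show (stratG g φ).On ∪ (stratG g ψ).On = _
    rw [ihφ, ihψ, ← Set.image_union]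
    have : Set.Iio φ.depth ∪ Set.Iio ψ.depth = Set.Iio (max φ.depth ψ.depth) := by
      ext k; simp only [Set.mem_union, Set.mem_Iio]; omega
    rw [this]
    rfl
  | not φ ih => exact ih
  | all x φ ih => exact ih
  | op K φ ih =>
    show insert (g φ.depth) (stratG g φ).On = g '' Set.Iio (φ.depth + 1)
    rw [ih]
    ext β
    simp only [Set.mem_insert_iff, Set.mem_image, Set.mem_Iio]
    constructor
    · rintro (rfl | ⟨k, hk, rfl⟩)
      · exact ⟨φ.depth, by omega, rfl⟩
      · exact ⟨k, by omega, rfl⟩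
    · rintro ⟨k, hk, rfl⟩
      rcases Nat.lt_succ_iff_lt_or_eq.mp hk with h | rfl
      · exact Or.inr ⟨k, h, rfl⟩
      · exact Or.inl rfl

lemma stratG_congr {g g' : ℕ → Ord2} :
    ∀ φ : LEA, (∀ k < φ.depth, g k = g' k) → stratG g φ = stratG g' φ := by
  intro φ
  induction φ with
  | eq t u => intro h; rfl
  | imp φ ψ ihφ ihψ =>
    intro h
    have hd : φ.depth ≤ max φ.depth ψ.depth ∧ ψ.depth ≤ max φ.depth ψ.depth :=
      ⟨le_max_left _ _, le_max_right _ _⟩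
    simp only [stratG]
    rw [ihφ (fun k hk => h k (by show k < max φ.depth ψ.depth; omega)),
        ihψ (fun k hk => h k (by show k < max φ.depth ψ.depth; omega))]
  | not φ ih => intro h; simp only [stratG]; rw [ih h]
  | all x φ ih => intro h; simp only [stratG]; rw [ih h]
  | op K φ ih =>
    intro h
    simp only [stratG]
    rw [ih (fun k hk => h k (by show k < φ.depth + 1; omega)),
        h φ.depth (by show φ.depth < φ.depth + 1; omega)]

lemma stratify_eq_stratG {X : Set Ord2} {g : ℕ → Ord2} :
    ∀ φ : LEA, (∀ k < φ.depth, leastIn (X \ g '' Set.Iio k) = g k) →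
      stratify X φ = stratG g φ := by
  intro φ
  induction φ with
  | eq t u => intro h; rfl
  | imp φ ψ ihφ ihψ =>
    intro h
    simp only [stratify, stratG]
    rw [ihφ (fun k hk => h k (by show k < max φ.depth ψ.depth; omega)),
        ihψ (fun k hk => h k (by show k < max φ.depth ψ.depth; omega))]
  | not φ ih => intro h; simp only [stratify, stratG]; rw [ih h]
  | all x φ ih => intro h; simp only [stratify, stratG]; rw [ih h]
  | op K φ ih =>
    intro h
    have hφ := ih (fun k hk => h k (by show k < φ.depth + 1; omega))
    simp only [stratify, stratG, hφ, On_stratG]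
    rw [h φ.depth (by show φ.depth < φ.depth + 1; omega)]

lemma stratify_range {g : ℕ → Ord2} (hg : StrictMono g) (φ : LEA) :
    stratify (Set.range g) φ = stratG g φ :=
  stratify_eq_stratG φ (fun k _ => leastIn_range_diff hg k)

lemma eval_upStruc {M : PreStruc Ord2} (f : LEA → LOO) (s : ℕ → M.U) :
    ∀ t : Term, Term.eval (upStruc M f) s t = Term.eval M s t := by
  intro t
  induction t <;> simp only [Term.eval, *] <;> rfl

lemma eval_downStruc {N : PreStruc Unit} (s : ℕ → N.U) :
    ∀ t : Term, Term.eval (downStruc N) s t = Term.eval N s t := by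
  intro t
  induction t <;> simp only [Term.eval, *] <;> rfl

lemma eval_NM (T : Set LEA) (T' : Set LOO) (s : ℕ → ℕ) :
    ∀ t : Term, Term.eval (NStruc T) s t = Term.eval (MStruc T') s t := by
  intro t
  induction t <;> simp only [Term.eval, *] <;> rfl

lemma sat_upStruc {M : PreStruc Ord2} (X : Set Ord2) :
    ∀ (φ : LEA) (s : ℕ → M.U),
      Sat (upStruc M (stratify X)) φ s ↔ Sat M (stratify X φ) s := by
  intro φ
  induction φ with
  | eq t u => intro s; show _ = _ ↔ _ = _; rw [eval_upStruc, eval_upStruc]; exact Iff.rfl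
  | imp φ ψ ihφ ihψ => intro s; exact imp_congr (ihφ s) (ihψ s)
  | not φ ih => intro s; exact not_congr (ih s)
  | all x φ ih => intro s; exact forall_congr' fun a => ih _
  | op K φ _ => intro s; cases K; exact Iff.rfl

lemma sat_downStruc {N : PreStruc Unit} :
    ∀ (φ : LOO) (s : ℕ → N.U), Sat (downStruc N) φ s ↔ Sat N φ.down s := by
  intro φ
  induction φ with
  | eq t u => intro s; show _ = _ ↔ _ = _; rw [eval_downStruc, eval_downStruc]; exact Iff.rfl
  | imp φ ψ ihφ ihψ => intro s; exact imp_congr (ihφ s) (ihψ s)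
  | not φ ih => intro s; exact not_congr (ih s)
  | all x φ ih => intro s; exact forall_congr' fun a => ih _
  | op K φ _ => intro s; exact Iff.rfl

lemma alpha_down (φ : LOO) : ∀ (ψ : LOO) (ρ : List (ℕ × ℕ)),
    Formula.alpha ρ φ ψ → Formula.alpha ρ φ.down ψ.down := by
  induction φ with
  | eq t₁ t₂ => intro ψ ρ h; cases ψ <;> first | exact h | exact h.elim
  | imp φ₁ φ₂ ih₁ ih₂ =>
    intro ψ ρ h
    cases ψ with
    | imp ψ₁ ψ₂ => exact ⟨ih₁ ψ₁ ρ h.1, ih₂ ψ₂ ρ h.2⟩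
    | eq _ _ => exact h.elim
    | not _ => exact h.elim
    | all _ _ => exact h.elim
    | op _ _ => exact h.elim
  | not φ ih =>
    intro ψ ρ h
    cases ψ with
    | not ψ => exact ih ψ ρ h
    | eq _ _ => exact h.elim
    | imp _ _ => exact h.elim
    | all _ _ => exact h.elim
    | op _ _ => exact h.elim
  | all x φ ih =>
    intro ψ ρ h
    cases ψ with
    | all y ψ => exact ih ψ _ h
    | eq _ _ => exact h.elim
    | imp _ _ => exact h.elim
    | not _ => exact h.elim
    | op _ _ => exact h.elim
  | op K φ ih =>
    intro ψ ρ h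
    cases ψ with
    | op K' ψ => exact ⟨rfl, ih ψ ρ h.2⟩
    | eq _ _ => exact h.elim
    | imp _ _ => exact h.elim
    | not _ => exact h.elim
    | all _ _ => exact h.elim

lemma isStruc_downStruc {N : PreStruc Unit} (hN : IsStruc N) : IsStruc (downStruc N) := by
  obtain ⟨h1, h2, h3⟩ := hN
  refine ⟨?_, ?_, ?_⟩
  · intro K φ s t hst
    exact h1 () φ.down s t (fun x hx => hst x ((free_down φ) ▸ hx))
  · intro K φ ψ s hav
    exact h2 () φ.down ψ.down s (alpha_down φ ψ [] hav)
  · intro K φ x y s hsub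
    show N.opSat () (φ.subst x (.var y)).down s ↔ N.opSat () φ.down _
    rw [down_subst]
    exact h3 () φ.down x y s (substitutable_down x _ φ hsub)

lemma isStruc_upStruc {M : PreStruc Ord2} (hM : IsStruc M) (g : ℕ → Ord2)
    (hg : StrictMono g) : IsStruc (upStruc M (stratify (Set.range g))) := by
  obtain ⟨h1, h2, h3⟩ := hM
  refine ⟨?_, ?_, ?_⟩
  · intro K φ s t hst
    show Sat M (stratify (Set.range g) (.op () φ)) s ↔
        Sat M (stratify (Set.range g) (.op () φ)) t
    rw [stratify_range hg]
    show M.opSat (g φ.depth) (stratG g φ) s ↔ M.opSat (g φ.depth) (stratG g φ) t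
    exact h1 (g φ.depth) (stratG g φ) s t (fun x hx => hst x ((free_stratG g φ) ▸ hx))
  · intro K φ ψ s hav
    show Sat M (stratify (Set.range g) (.op () φ)) s ↔
        Sat M (stratify (Set.range g) (.op () ψ)) s
    rw [stratify_range hg, stratify_range hg]
    show M.opSat (g φ.depth) (stratG g φ) s ↔ M.opSat (g ψ.depth) (stratG g ψ) s
    rw [depth_alpha φ ψ [] hav]
    exact h2 (g ψ.depth) (stratG g φ) (stratG g ψ) s (alpha_stratG g φ ψ [] hav)
  · intro K φ x y s hsub
    show Sat M (stratify (Set.range g) (.op () (φ.subst x (.var y)))) s ↔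
        Sat M (stratify (Set.range g) (.op () φ)) _
    rw [stratify_range hg, stratify_range hg]
    show M.opSat (g (φ.subst x (.var y)).depth) (stratG g (φ.subst x (.var y))) s ↔
        M.opSat (g φ.depth) (stratG g φ) _
    rw [depth_subst, subst_stratG]
    exact h3 (g φ.depth) (stratG g φ) x y s (substitutable_stratG g x _ φ hsub)

/-- The central collapsing lemma. -/
lemma models_iff (T : Set LEA) (σ : LEA) :
    Models T σ ↔ Models (cut (oplus T) (g0 σ.depth)) (stratG g0 σ) := by
  constructor
  · intro h M hM hMT s
    set d := σ.depth with hd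
    set g' : ℕ → Ord2 := fun k => if k < d then g0 k else toLex (d, k - d + 1) with hg'
    have hg'mono : StrictMono g' := by
      intro a b hab
      show (if a < d then g0 a else toLex (d, a - d + 1)) <
        (if b < d then g0 b else toLex (d, b - d + 1))
      split_ifs with ha hb hb
      · exact g0_mono hab
      · show (toLex (a + 1, 0) : Ord2) < toLex (d, b - d + 1)
        refine (Prod.Lex.lt_iff ..).mpr ?_
        rcases Nat.lt_or_ge (a + 1) d with h' | h'
        · exact Or.inl h'
        · exact Or.inr ⟨by dsimp only [ofLex_toLex]; omega, by dsimp only [ofLex_toLex]; omega⟩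
      · omega
      · exact (Prod.Lex.lt_iff ..).mpr (Or.inr ⟨rfl, by dsimp only [ofLex_toLex]; omega⟩)
    have hlt : ∀ k, g' k < g0 d := by
      intro k
      show (if k < d then g0 k else toLex (d, k - d + 1)) < toLex (d + 1, 0)
      split_ifs with hk
      · exact (Prod.Lex.lt_iff ..).mpr (Or.inl (by dsimp only [g0, ofLex_toLex]; omega))
      · exact (Prod.Lex.lt_iff ..).mpr (Or.inl (by dsimp only [ofLex_toLex]; omega))
    have hNT : ∀ θ ∈ T, ∀ s' : ℕ → M.U,
        Sat (upStruc M (stratify (Set.range g'))) θ s' := by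
      intro θ hθ s'
      rw [sat_upStruc]
      apply hMT
      refine ⟨⟨θ, hθ, _, ⟨Set.range g',
        Set.infinite_range_of_injective hg'mono.injective, rfl⟩, rfl⟩, ?_⟩
      intro β hβ
      rw [stratify_range hg'mono, On_stratG] at hβ
      obtain ⟨k, -, rfl⟩ := hβ
      exact hlt k
    have hs := h (upStruc M (stratify (Set.range g'))) (isStruc_upStruc hM g' hg'mono) hNT s
    rw [sat_upStruc, stratify_range hg'mono] at hs
    have hcongr : stratG g' σ = stratG g0 σ :=
      stratG_congr σ (fun k hk => by
        show (if k < d then g0 k else _) = g0 k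
        rw [if_pos (show k < d from hk)])
    rwa [hcongr] at hs
  · intro h N hN hNT s
    have hMT : ∀ χ ∈ cut (oplus T) (g0 σ.depth), ∀ s' : ℕ → (downStruc N).U,
        Sat (downStruc N) χ s' := by
      rintro χ ⟨⟨θ, hθ, f, ⟨Y, hY, rfl⟩, rfl⟩, -⟩ s'
      refine (sat_downStruc _ _).mpr ?_; rw [down_stratify]
      exact hNT θ hθ s'
    have hs := h (downStruc N) (isStruc_downStruc hN) hMT s
    rwa [sat_downStruc, down_stratG] at hs

/-- Main lemma: truth in `𝒩_T` matches truth of the stratification in `𝓜_{T⁺}`. -/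
lemma sat_main (T : Set LEA) (φ : LEA) : ∀ s : ℕ → ℕ,
    Sat (NStruc T) φ s ↔ Sat (MStruc (oplus T)) (stratG g0 φ) s := by
  induction φ with
  | eq t u =>
    intro s
    show _ = _ ↔ _ = _
    rw [eval_NM T (oplus T) s t, eval_NM T (oplus T) s u]; exact Iff.rfl
  | imp φ ψ ihφ ihψ => intro s; exact imp_congr (ihφ s) (ihψ s)
  | not φ ih => intro s; exact not_congr (ih s)
  | all x φ ih => intro s; exact forall_congr' fun a => ih _
  | op K φ _ =>
    intro s
    show Models T (assignSub s φ) ↔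
      Models (cut (oplus T) (g0 φ.depth)) (assignSub s (stratG g0 φ))
    have h1 : assignSub s (stratG g0 φ) = stratG g0 (assignSub s φ) :=
      (numSub_stratG g0 s φ []).symm
    have h2 : φ.depth = (assignSub s φ).depth := (depth_numSub s φ []).symm
    rw [h1, h2]
    exact models_iff T (assignSub s φ)

/-- If `𝓜_{T^⊕} ⊨ T^⊕` then `𝒩_T ⊨ T`, i.e. `T` is true. -/
theorem true_of_oplus_sat (T : Set LEA) (hT : IsTheory T)
    (h : SatTheory (MStruc (oplus T)) (oplus T)) : TheoryTrue T := by
  intro θ hθ s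
  rw [sat_main T θ s]
  refine h _ ⟨θ, hθ, stratify (Set.range g0),
    ⟨Set.range g0, Set.infinite_range_of_injective g0_mono.injective, rfl⟩,
    (stratify_range g0_mono θ).symm⟩ s

end FCT
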